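/- Let M ∈ ℝ^{n×n}, let P ∈ ℝ^{n×n} be symmetric with P − I positive semidefinite, and let μ > 0 be such that P M + Mᵀ P + 2μ P is negative semidefinite. Then the matrix exponential satisfies |exp(Mt)| ≤ √|P| · e^{−μt} for all t ≥ 0, where |·| denotes the matrix operator norm induced by the Euclidean vector norm. -/

import Mathlib

open Matrix

/-- Operator norm of a matrix induced by the Euclidean vector norms. -/
noncomputable def opNorm {n m : ℕ} (A : Matrix (Fin n) (Fin m) ℝ) : ℝ :=
  ‖LinearMap.toContinuousLinearMap (Matrix.toEuclideanLin A)‖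

/-- `mexp A t = exp (t A)`, the matrix exponential. -/
noncomputable def mexp {n : ℕ} (A : Matrix (Fin n) (Fin n) ℝ) (t : ℝ) :
    Matrix (Fin n) (Fin n) ℝ :=
  NormedSpace.exp (t • A)

namespace Stmt17Aux

open RealInnerProductSpace

variable {n : ℕ}

lemma clm_eq (A : Matrix (Fin n) (Fin n) ℝ) :
    LinearMap.toContinuousLinearMap (Matrix.toEuclideanLin A) =
      Matrix.toEuclideanCLM (n := Fin n) (𝕜 := ℝ) A := by
  ext x; rfl

lemma exp_transfer (A : Matrix (Fin n) (Fin n) ℝ) (t : ℝ) :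
    Matrix.toEuclideanCLM (n := Fin n) (𝕜 := ℝ) (NormedSpace.exp (t • A)) =
      NormedSpace.exp (t • Matrix.toEuclideanCLM (n := Fin n) (𝕜 := ℝ) A) := by
  letI : SeminormedRing (Matrix (Fin n) (Fin n) ℝ) := Matrix.linftyOpSemiNormedRing
  letI : NormedRing (Matrix (Fin n) (Fin n) ℝ) := Matrix.linftyOpNormedRing
  letI : NormedAlgebra ℝ (Matrix (Fin n) (Fin n) ℝ) := Matrix.linftyOpNormedAlgebra
  letI : NormedAlgebra ℚ (Matrix (Fin n) (Fin n) ℝ) :=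
    NormedAlgebra.restrictScalars ℚ ℝ (Matrix (Fin n) (Fin n) ℝ)
  have hc : Continuous (Matrix.toEuclideanCLM (n := Fin n) (𝕜 := ℝ)) := by
    have : (⇑(Matrix.toEuclideanCLM (n := Fin n) (𝕜 := ℝ))) =
        ⇑((Matrix.toEuclideanLin.trans LinearMap.toContinuousLinearMap
        : Matrix (Fin n) (Fin n) ℝ ≃ₗ[ℝ] _)) := by
      funext A; ext x; rfl
    rw [this]
    exact LinearMap.continuous_of_finiteDimensional _
  rw [← _root_.map_smul]
  exact NormedSpace.map_exp _ hc _

lemma inner_clm (A : Matrix (Fin n) (Fin n) ℝ) (x y : EuclideanSpace ℝ (Fin n)) :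
    ⟪x, Matrix.toEuclideanCLM (n := Fin n) (𝕜 := ℝ) A y⟫ =
      (WithLp.equiv 2 _ x) ⬝ᵥ (A *ᵥ (WithLp.equiv 2 _ y)) := by
  simp [PiLp.inner_apply, dotProduct, RCLike.inner_apply, mul_comm]

lemma inner_eq_dot (x y : EuclideanSpace ℝ (Fin n)) :
    ⟪x, y⟫ = (WithLp.equiv 2 _ x) ⬝ᵥ (WithLp.equiv 2 _ y) := by
  simp [PiLp.inner_apply, dotProduct, mul_comm]

lemma clm_equiv_apply (A : Matrix (Fin n) (Fin n) ℝ) (y : EuclideanSpace ℝ (Fin n)) :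
    WithLp.equiv 2 _ (Matrix.toEuclideanCLM (n := Fin n) (𝕜 := ℝ) A y) =
      A *ᵥ (WithLp.equiv 2 _ y) := by
  exact Matrix.ofLp_toEuclideanCLM A y

set_option maxHeartbeats 1000000 in
set_option synthInstance.maxHeartbeats 200000 in
/-- The key vector bound. -/
lemma vector_bound (M P : Matrix (Fin n) (Fin n) ℝ) (μ : ℝ) (hμ : 0 < μ)
    (hPI : ∀ x : Fin n → ℝ, 0 ≤ x ⬝ᵥ ((P - 1) *ᵥ x))
    (hLyap : ∀ x : Fin n → ℝ,
      x ⬝ᵥ ((P * M + M.transpose * P + (2 * μ) • P) *ᵥ x) ≤ 0)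
    (t : ℝ) (ht : 0 ≤ t) (x₀ : EuclideanSpace ℝ (Fin n)) :
    ‖NormedSpace.exp (t • Matrix.toEuclideanCLM (n := Fin n) (𝕜 := ℝ) M) x₀‖ ≤
      (Real.sqrt (opNorm P) * Real.exp (-μ * t)) * ‖x₀‖ := by
  set L := Matrix.toEuclideanCLM (n := Fin n) (𝕜 := ℝ) M with hLdef
  set Q := Matrix.toEuclideanCLM (n := Fin n) (𝕜 := ℝ) P with hQdef
  have hQnorm : opNorm P = ‖Q‖ := by rw [opNorm, clm_eq, hQdef]
  have hop : 0 ≤ opNorm P := by rw [hQnorm]; exact norm_nonneg _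
  set u : ℝ → EuclideanSpace ℝ (Fin n) :=
    fun s => NormedSpace.exp (s • L) x₀ with hu
  have hderiv : ∀ s, HasDerivAt u (L (u s)) s := by
    intro s
    have h := (hasDerivAt_exp_smul_const' L s).clm_apply (hasDerivAt_const s x₀)
    simpa using h
  set V : ℝ → ℝ := fun s => ⟪u s, Q (u s)⟫ with hV
  have hVs : ∀ s, V s = (WithLp.equiv 2 _ (u s)) ⬝ᵥ (P *ᵥ (WithLp.equiv 2 _ (u s))) := by
    intro s
    show ⟪u s, Q (u s)⟫ = _
    rw [hQdef, inner_clm]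
  have hVderiv : ∀ s,
      HasDerivAt V (⟪u s, Q (L (u s))⟫ + ⟪L (u s), Q (u s)⟫) s := by
    intro s
    have h := (hderiv s).inner ℝ (Q.hasFDerivAt.comp_hasDerivAt s (hderiv s))
    simp only [Function.comp] at h
    exact h
  have hVle : ∀ s, ⟪u s, Q (L (u s))⟫ + ⟪L (u s), Q (u s)⟫ ≤ -(2 * μ) * V s := by
    intro s
    set x : Fin n → ℝ := WithLp.equiv 2 _ (u s) with hx
    have h1 : ⟪u s, Q (L (u s))⟫ = x ⬝ᵥ (P *ᵥ (M *ᵥ x)) := by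
      rw [hQdef, inner_clm, hLdef, clm_equiv_apply]
    have h2 : ⟪L (u s), Q (u s)⟫ = x ⬝ᵥ ((M.transpose * P) *ᵥ x) := by
      rw [inner_eq_dot, hLdef, clm_equiv_apply, hQdef, clm_equiv_apply,
        ← Matrix.mulVec_mulVec, Matrix.dotProduct_mulVec x M.transpose,
        Matrix.vecMul_transpose, dotProduct_comm]
    have h := hLyap x
    rw [Matrix.add_mulVec, Matrix.add_mulVec, dotProduct_add,
      dotProduct_add, Matrix.smul_mulVec, dotProduct_smul,
      ← Matrix.mulVec_mulVec, smul_eq_mul] at h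
    rw [h1, h2, hVs s, ← hx]
    nlinarith [h]
  set g : ℝ → ℝ := fun s => Real.exp (2 * μ * s) * V s with hg
  have hgderiv : ∀ s, HasDerivAt g
      (Real.exp (2 * μ * s) * (2 * μ * V s +
        (⟪u s, Q (L (u s))⟫ + ⟪L (u s), Q (u s)⟫))) s := by
    intro s
    have h2 : HasDerivAt (fun s : ℝ => 2 * μ * s) (2 * μ) s := by
      simpa using (hasDerivAt_id s).const_mul (2 * μ)
    have he : HasDerivAt (fun s : ℝ => Real.exp (2 * μ * s))
        (Real.exp (2 * μ * s) * (2 * μ)) s := h2.exp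
    have := he.mul (hVderiv s)
    exact this.congr_deriv (by ring)
  have hganti : Antitone g := by
    apply antitone_of_hasDerivAt_nonpos hgderiv
    intro s
    show Real.exp (2 * μ * s) * (2 * μ * V s +
        (⟪u s, Q (L (u s))⟫ + ⟪L (u s), Q (u s)⟫)) ≤ 0
    have h1 := hVle s
    have h2 : (0:ℝ) < Real.exp (2 * μ * s) := Real.exp_pos _
    nlinarith
  have hgle : Real.exp (2 * μ * t) * V t ≤ V 0 := by
    have h := hganti ht
    have hg0 : g 0 = V 0 := by
      show Real.exp (2 * μ * 0) * V 0 = V 0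
      simp
    rw [hg0] at h
    exact h
  have hu0 : u 0 = x₀ := by
    show NormedSpace.exp ((0:ℝ) • L) x₀ = x₀
    have h0 : (0:ℝ) • L = 0 := zero_smul ℝ L
    rw [h0, NormedSpace.exp_zero]
    rfl
  have hV0 : V 0 ≤ opNorm P * ‖x₀‖ ^ 2 := by
    have : V 0 = ⟪x₀, Q x₀⟫ := by rw [hV]; simp only []; rw [hu0]
    rw [this, hQnorm]
    calc ⟪x₀, Q x₀⟫ ≤ ‖x₀‖ * ‖Q x₀‖ := real_inner_le_norm _ _
      _ ≤ ‖x₀‖ * (‖Q‖ * ‖x₀‖) :=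
          mul_le_mul_of_nonneg_left (Q.le_opNorm x₀) (norm_nonneg _)
      _ = ‖Q‖ * ‖x₀‖ ^ 2 := by ring
  have hnormsq : ‖u t‖ ^ 2 ≤ V t := by
    have h := hPI (WithLp.equiv 2 _ (u t))
    rw [Matrix.sub_mulVec, dotProduct_sub, Matrix.one_mulVec] at h
    have h3 : ‖u t‖ ^ 2 = (WithLp.equiv 2 _ (u t)) ⬝ᵥ (WithLp.equiv 2 _ (u t)) := by
      rw [← real_inner_self_eq_norm_sq, inner_eq_dot]
    rw [hVs t]
    linarith
  have hVt : V t ≤ Real.exp (-(2 * μ * t)) * V 0 := by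
    rw [Real.exp_neg, inv_mul_eq_div, le_div_iff₀ (Real.exp_pos _), mul_comm]
    exact hgle
  have hfinal : ‖u t‖ ^ 2 ≤
      ((Real.sqrt (opNorm P) * Real.exp (-μ * t)) * ‖x₀‖) ^ 2 := by
    have hrhs : ((Real.sqrt (opNorm P) * Real.exp (-μ * t)) * ‖x₀‖) ^ 2
        = opNorm P * (Real.exp (-(2 * μ * t)) * ‖x₀‖ ^ 2) := by
      have h1 : Real.exp (-μ * t) ^ 2 = Real.exp (-(2 * μ * t)) := by
        rw [← Real.exp_nat_mul]; ring_nf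
      rw [mul_pow, mul_pow, Real.sq_sqrt hop, h1]
      ring
    rw [hrhs]
    have hexp : (0:ℝ) < Real.exp (-(2 * μ * t)) := Real.exp_pos _
    calc ‖u t‖ ^ 2 ≤ V t := hnormsq
      _ ≤ Real.exp (-(2 * μ * t)) * V 0 := hVt
      _ ≤ Real.exp (-(2 * μ * t)) * (opNorm P * ‖x₀‖ ^ 2) :=
          mul_le_mul_of_nonneg_left hV0 (le_of_lt hexp)
      _ = opNorm P * (Real.exp (-(2 * μ * t)) * ‖x₀‖ ^ 2) := by ring
  have hrnonneg : 0 ≤ (Real.sqrt (opNorm P) * Real.exp (-μ * t)) * ‖x₀‖ :=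
    mul_nonneg (mul_nonneg (Real.sqrt_nonneg _) (Real.exp_nonneg _)) (norm_nonneg _)
  have h := Real.sqrt_le_sqrt hfinal
  rwa [Real.sqrt_sq (norm_nonneg _), Real.sqrt_sq hrnonneg] at h

end Stmt17Aux

open Stmt17Aux

theorem stmt_17 (n : ℕ) (M P : Matrix (Fin n) (Fin n) ℝ) (μ : ℝ) (hμ : 0 < μ)
    (hPsymm : P.IsSymm)
    -- `P - I` is positive semidefinite
    (hPI : ∀ x : Fin n → ℝ, 0 ≤ x ⬝ᵥ ((P - 1) *ᵥ x))
    -- `P M + Mᵀ P + 2 μ P` is negative semidefinite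
    (hLyap : ∀ x : Fin n → ℝ,
      x ⬝ᵥ ((P * M + M.transpose * P + (2 * μ) • P) *ᵥ x) ≤ 0) :
    ∀ t : ℝ, 0 ≤ t →
      opNorm (mexp M t) ≤ Real.sqrt (opNorm P) * Real.exp (-μ * t) := by
  intro t ht
  have hcnonneg : 0 ≤ Real.sqrt (opNorm P) * Real.exp (-μ * t) :=
    mul_nonneg (Real.sqrt_nonneg _) (Real.exp_nonneg _)
  have hnorm : opNorm (mexp M t) =
      ‖NormedSpace.exp (t • Matrix.toEuclideanCLM (n := Fin n) (𝕜 := ℝ) M)‖ := by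
    rw [opNorm, mexp, clm_eq, exp_transfer]
  rw [hnorm]
  exact ContinuousLinearMap.opNorm_le_bound _ hcnonneg
    (vector_bound M P μ hμ hPI hLyap t ht)
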